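/- A formula φ(x;y) has the independence property witnessed on a group if there exist a group G, subgroups (H_i)_{i<ω}, elements (g_i)_{i<ω} with g_i ∈ H_j ↔ i ≠ j, such that setting d_I = ∏_{i∈I} g_i (increasing order) for finite I ⊆ ω, the membership pattern d_I ∈ H_j ↔ j ∉ I holds for all finite I and all j < ω. Prove that this membership pattern indeed holds: for every finite I ⊆ ω and every j < ω, d_I ∈ H_j if and only if j ∉ I — under the additional assumption that for each j, the set H_j · g_j · H_j is disjoint from H_j. -/

import Mathlib

lemma prod_mem_of_ne {G : Type*} [Group G] (H : ℕ → Subgroup G) (g : ℕ → G)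
    (hyp : ∀ i j, g i ∈ H j ↔ i ≠ j) (j : ℕ) :
    ∀ l : List ℕ, j ∉ l → (l.map g).prod ∈ H j := by
  intro l
  induction l with
  | nil => simp only [List.map_nil, List.prod_nil]; exact fun _ => one_mem (H j)
  | cons a t ih =>
    intro h
    simp only [List.mem_cons, not_or] at h
    simp only [List.map_cons, List.prod_cons]
    exact mul_mem ((hyp a j).mpr (fun e => h.1 e.symm)) (ih h.2)

theorem stmt8 {G : Type*} [Group G] (H : ℕ → Subgroup G) (g : ℕ → G)
    (hyp : ∀ i j, g i ∈ H j ↔ i ≠ j)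
    (hdisj : ∀ j, ∀ h₁ ∈ H j, ∀ h₂ ∈ H j, h₁ * g j * h₂ ∉ H j) :
    ∀ I : Finset ℕ, ∀ j, ((I.sort (· ≤ ·)).map g).prod ∈ H j ↔ j ∉ I := by
  intro I j
  have hmem : j ∈ I.sort (· ≤ ·) ↔ j ∈ I := Finset.mem_sort _
  have hnd : (I.sort (· ≤ ·)).Nodup := Finset.sort_nodup _ _
  constructor
  · intro hp hj
    rw [← hmem] at hj
    obtain ⟨a, b, heq⟩ := List.append_of_mem hj
    rw [heq] at hnd hp
    have hna : j ∉ a := fun h =>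
      List.disjoint_of_nodup_append hnd h List.mem_cons_self
    have hnb : j ∉ b := List.Nodup.notMem (List.Nodup.of_append_right hnd)
    have ha : (a.map g).prod ∈ H j := prod_mem_of_ne H g hyp j a hna
    have hb : (b.map g).prod ∈ H j := prod_mem_of_ne H g hyp j b hnb
    have : (a.map g).prod * g j * (b.map g).prod ∈ H j := by
      simpa [List.prod_append, mul_assoc] using hp
    exact hdisj j _ ha _ hb this
  · intro hj
    exact prod_mem_of_ne H g hyp j _ (fun h => hj (hmem.mp h))
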